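/- Let k_1,…,k_n : T^n → ℝ be smooth functions with ∑_{i=1}^n k_i = 1 identically, and for b ∈ ℝ let A(b) be the n×n matrix-valued function on T^n with diagonal entries k_i + 2(n−1)b and off-diagonal entries −2b. Then for all sufficiently large b, the matrix A(b) is positive definite at every point of T^n. -/

import Mathlib

noncomputable section

/-- The `n`-torus `T^n`. -/
abbrev Torus (n : ℕ) : Type := Fin n → AddCircle (1 : ℝ)

/-- The matrix `A(b)` with diagonal entries `k_i + 2(n−1)b` and off-diagonal
entries `−2b`. -/
def Amat (n : ℕ) (k : Fin n → ℝ) (b : ℝ) : Matrix (Fin n) (Fin n) ℝ :=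
  Matrix.of fun i j => if i = j then k i + 2 * ((n : ℝ) - 1) * b else -2 * b

set_option maxHeartbeats 2000000 in
/-- If `k_1,…,k_n : T^n → ℝ` are smooth (in particular continuous) with
`∑ k_i = 1`, then for all sufficiently large `b` the matrix `A(b)` is
positive definite at every point of `T^n`. -/
theorem Amat_posDef_of_large (n : ℕ) (hn : 0 < n)
    (k : Fin n → Torus n → ℝ) (hk : ∀ i, Continuous (k i))
    (hsum : ∀ θ, ∑ i, k i θ = 1) :
    ∃ b₀ : ℝ, ∀ b ≥ b₀, ∀ θ : Torus n,
      (Amat n (fun i => k i θ) b).PosDef := by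
  haveI : Fact ((0:ℝ) < 1) := ⟨zero_lt_one⟩
  haveI : Nonempty (Torus n) := ⟨fun _ => (0 : AddCircle (1:ℝ))⟩
  have hn1 : (1:ℝ) ≤ (n:ℝ) := by exact_mod_cast hn
  have hn0 : (0:ℝ) < (n:ℝ) := by linarith
  -- uniform bound on the k i
  have hbdd : ∀ i, ∃ C : ℝ, ∀ θ : Torus n, |k i θ| ≤ C := by
    intro i
    obtain ⟨C, hC⟩ := isCompact_univ.exists_bound_of_continuousOn (hk i).continuousOn
    exact ⟨C, fun θ => by simpa using hC θ trivial⟩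
  choose C hC using hbdd
  have hCnn : ∀ i, 0 ≤ C i := fun i =>
    le_trans (abs_nonneg _) (hC i (Classical.arbitrary _))
  set M : ℝ := 1 + ∑ i, C i with hMdef
  have hM1 : 1 ≤ M := by
    have : 0 ≤ ∑ i, C i := Finset.sum_nonneg fun i _ => hCnn i
    simp only [hMdef]; linarith
  have hMk : ∀ i (θ : Torus n), |k i θ| ≤ M := by
    intro i θ
    have h1 : C i ≤ ∑ j, C j :=
      Finset.single_le_sum (fun j _ => hCnn j) (Finset.mem_univ i)
    have := hC i θ
    simp only [hMdef]; linarith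
  refine ⟨M + 2*(n:ℝ)*M^2, fun b hb θ => ?_⟩
  have hb0 : (0:ℝ) < b := by nlinarith
  have hM3 : (3:ℝ) ≤ M + 2*(n:ℝ)*M^2 := by
    nlinarith [mul_nonneg (by linarith : (0:ℝ) ≤ (n:ℝ) - 1) (sq_nonneg M),
      sq_nonneg (M - 1)]
  have h2nb : 2*(M + 2*(n:ℝ)*M^2) ≤ 2*(n:ℝ)*b := by
    nlinarith [mul_nonneg hb0.le (by linarith : (0:ℝ) ≤ (n:ℝ) - 1)]
  refine Matrix.PosDef.of_dotProduct_mulVec_pos ?_ ?_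
  · -- Hermitian
    ext i j
    by_cases h : i = j <;>
      simp [Amat, Matrix.conjTranspose_apply, h, eq_comm]
  · intro x hx
    set s : ℝ := ∑ i, x i with hs
    set t : ℝ := s / n with ht
    set w : Fin n → ℝ := fun i => x i - t with hw
    have hx_eq : ∀ i, x i = w i + t := fun i => by simp [hw]
    have hst : s = n * t := by rw [ht]; field_simp
    have hwsum : ∑ i, w i = 0 := by
      simp only [hw]
      rw [Finset.sum_sub_distrib, Finset.sum_const, Finset.card_univ, Fintype.card_fin,
        nsmul_eq_mul, ← hs, hst]
      ring
    -- the quadratic form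
    have hform : dotProduct (star x) (Matrix.mulVec (Amat n (fun i => k i θ) b) x)
        = (∑ i, k i θ * (x i)^2) + 2*(n:ℝ)*b*(∑ i, (x i)^2) - 2*b*s^2 := by
      have h1 : ∀ i : Fin n, (∑ j, (if i = j then k i θ + 2*((n:ℝ)-1)*b else -2*b) * x j)
          = k i θ * x i + 2*(n:ℝ)*b * x i - 2*b*s := by
        intro i
        have he : ∀ j : Fin n, (if i = j then k i θ + 2*((n:ℝ)-1)*b else -2*b) * x j
            = (-2*b) * x j + (if i = j then (k i θ + 2*(n:ℝ)*b) * x j else 0) := by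
          intro j; by_cases h : i = j <;> simp [h] <;> ring
        simp_rw [he]
        rw [Finset.sum_add_distrib, Finset.sum_ite_eq, ← Finset.mul_sum]
        simp [← hs]
        ring
      simp only [dotProduct, Matrix.mulVec, Amat, Matrix.of_apply, Pi.star_apply,
        star_trivial]
      rw [Finset.sum_congr rfl (fun i _ => by rw [h1 i])]
      have h2 : ∀ i : Fin n, x i * (k i θ * x i + 2*(n:ℝ)*b * x i - 2*b*s)
          = k i θ * (x i)^2 + 2*(n:ℝ)*b*(x i)^2 - 2*b*s*(x i) := by intro i; ring
      simp_rw [h2]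
      rw [Finset.sum_sub_distrib, Finset.sum_add_distrib, ← Finset.mul_sum, ← Finset.mul_sum,
        ← hs]
      ring
    -- decompose the sums
    have hsq : ∑ i, (x i)^2 = (∑ i, (w i)^2) + (n:ℝ) * t^2 := by
      have he : ∀ i : Fin n, (x i)^2 = (w i)^2 + (2*t)*(w i) + t^2 := fun i => by
        rw [hx_eq i]; ring
      simp_rw [he]
      rw [Finset.sum_add_distrib, Finset.sum_add_distrib, ← Finset.mul_sum, hwsum,
        Finset.sum_const, Finset.card_univ, Fintype.card_fin, nsmul_eq_mul]
      ring
    have hkx : ∑ i, k i θ * (x i)^2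
        = (∑ i, k i θ * (w i)^2) + 2*t*(∑ i, k i θ * w i) + t^2 := by
      have he : ∀ i : Fin n, k i θ * (x i)^2
          = k i θ * (w i)^2 + (2*t)*(k i θ * w i) + t^2 * k i θ := fun i => by
        rw [hx_eq i]; ring
      simp_rw [he]
      rw [Finset.sum_add_distrib, Finset.sum_add_distrib, ← Finset.mul_sum, ← Finset.mul_sum,
        hsum θ]
      ring
    -- pointwise lower bound
    have hpt : ∀ i : Fin n, 0 ≤ k i θ * (w i)^2 + (2*t)*(k i θ * w i)
        + (M + 2*(n:ℝ)*M^2) * (w i)^2 + t^2/(2*(n:ℝ)) := by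
      intro i
      obtain ⟨hk1, hk2⟩ := abs_le.mp (hMk i θ)
      have hA : (0:ℝ) ≤ (n:ℝ) * (M + k i θ) * (w i)^2 :=
        mul_nonneg (mul_nonneg hn0.le (by linarith)) (sq_nonneg _)
      have hB : (0:ℝ) ≤ (n:ℝ) * (n:ℝ) * (M - k i θ) * (M + k i θ) * (w i)^2 :=
        mul_nonneg (mul_nonneg (mul_nonneg (mul_nonneg hn0.le hn0.le)
          (by linarith)) (by linarith)) (sq_nonneg _)
      have key : 0 ≤ 2*(n:ℝ)*(k i θ * (w i)^2 + (2*t)*(k i θ * w i)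
          + (M + 2*(n:ℝ)*M^2) * (w i)^2) + t^2 := by
        nlinarith [sq_nonneg (t + 2*(n:ℝ)*(k i θ)*(w i)), hA, hB]
      have heq : k i θ * (w i)^2 + (2*t)*(k i θ * w i)
          + (M + 2*(n:ℝ)*M^2) * (w i)^2 + t^2/(2*(n:ℝ))
          = (2*(n:ℝ)*(k i θ * (w i)^2 + (2*t)*(k i θ * w i)
          + (M + 2*(n:ℝ)*M^2) * (w i)^2) + t^2) / (2*(n:ℝ)) := by
        field_simp
      rw [heq]
      exact div_nonneg key (by positivity)
    have hS : 0 ≤ (∑ i, k i θ * (w i)^2) + 2*t*(∑ i, k i θ * w i)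
        + (M + 2*(n:ℝ)*M^2) * (∑ i, (w i)^2) + t^2/2 := by
      have h := Finset.sum_nonneg (fun i (_ : i ∈ Finset.univ) => hpt i)
      rw [Finset.sum_add_distrib, Finset.sum_add_distrib, Finset.sum_add_distrib,
        ← Finset.mul_sum, ← Finset.mul_sum, Finset.sum_const, Finset.card_univ,
        Fintype.card_fin, nsmul_eq_mul] at h
      have hc : (n:ℝ) * (t^2/(2*(n:ℝ))) = t^2/2 := by field_simp
      rw [hc] at h
      linarith
    have hS0 : 0 ≤ ∑ i, (w i)^2 := Finset.sum_nonneg fun i _ => sq_nonneg _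
    have hbM : M + 2*(n:ℝ)*M^2 ≤ b := hb
    have hcoef : (M + 2*(n:ℝ)*M^2) * (∑ i, (w i)^2) ≤ 2*(n:ℝ)*b*(∑ i, (w i)^2) := by
      have h1 : M + 2*(n:ℝ)*M^2 ≤ 2*(n:ℝ)*b := by nlinarith
      exact mul_le_mul_of_nonneg_right h1 hS0
    obtain ⟨i, hi⟩ := Function.ne_iff.mp hx
    have hwi : t ≠ 0 ∨ w i ≠ 0 := by
      by_contra h
      push_neg at h
      exact hi (by simp [hx_eq i, h.1, h.2])
    have hSi : (w i)^2 ≤ ∑ j, (w j)^2 :=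
      Finset.single_le_sum (f := fun j => (w j)^2) (fun j _ => sq_nonneg _) (Finset.mem_univ i)
    rw [hform, hkx, hsq, hst]
    have hring : (∑ i, k i θ * (w i)^2) + 2*t*(∑ i, k i θ * w i) + t^2
        + 2*(n:ℝ)*b*((∑ i, (w i)^2) + (n:ℝ)*t^2) - 2*b*((n:ℝ)*t)^2
        = ((∑ i, k i θ * (w i)^2) + 2*t*(∑ i, k i θ * w i) + t^2)
          + 2*(n:ℝ)*b*(∑ i, (w i)^2) := by ring
    rw [hring]
    have hcoef2 : 2*(M + 2*(n:ℝ)*M^2) * (∑ i, (w i)^2) ≤ 2*(n:ℝ)*b*(∑ i, (w i)^2) :=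
      mul_le_mul_of_nonneg_right h2nb hS0
    have hMS0 : (0:ℝ) ≤ (M + 2*(n:ℝ)*M^2) * (∑ i, (w i)^2) :=
      mul_nonneg (by linarith) hS0
    clear_value w t s M
    rcases hwi with h | h
    · have hpos : 0 < t^2 := by positivity
      linarith only [hS, hcoef2, hpos, hMS0]
    · have hpos : 0 < (w i)^2 := by positivity
      have hprod : 3*(w i)^2 ≤ (M + 2*(n:ℝ)*M^2) * (∑ i, (w i)^2) := by
        calc 3*(w i)^2 ≤ 3*(∑ j, (w j)^2) := by linarith only [hSi]
          _ ≤ (M + 2*(n:ℝ)*M^2) * (∑ j, (w j)^2) :=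
            mul_le_mul_of_nonneg_right hM3 hS0
      linarith only [hS, hcoef2, hprod, hpos, sq_nonneg t]
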